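/- Let B be a blocked plan for an s^m experiment with b blocks of size k over F, let V be a nontrivial vector subspace of F^m (V ≠ {0}), and let a, b ∈ F^m with a ∉ V^⊥ and b ∉ V^⊥. Suppose there exists c ∈ F with c ≠ 0 and c ≠ 1 such that a − c·b ∈ V^⊥, and suppose every diagonal entry of N^{ab} is positive (n^{ab}_{γ,γ} > 0 for all γ ∈ F, which holds in particular when E_a is aliased with E_b in B). Then every entry of the incidence matrix Ñ^{ab} of the expansion V(B) is positive; in particular E_a and E_b are not aliased in V(B). -/

import Mathlib

open Matrix

/-- The `E_a`-versus-`E_c` incidence matrix of a blocked plan: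
entry `(α, β)` counts the runs at level `α` of `E_a` and level `β` of `E_c`. -/
def incNN {m k : ℕ} {F : Type*} [Field F] [Fintype F] [DecidableEq F]
    {J : Type*} [Fintype J] (B : J → Fin k → (Fin m → F)) (a c : Fin m → F) :
    Matrix F F ℕ := fun α β =>
  (Finset.univ.filter (fun ju : J × Fin k =>
    (∑ i, a i * B ju.1 ju.2 i) = α ∧ (∑ i, c i * B ju.1 ju.2 i) = β)).card

/-- The `E_a`-versus-block incidence matrix of a blocked plan:
entry `(α, j)` counts the runs of block `j` at level `α` of `E_a`. -/
def incBlk {m k : ℕ} {F : Type*} [Field F] [Fintype F] [DecidableEq F]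
    {J : Type*} [Fintype J] (B : J → Fin k → (Fin m → F)) (a : Fin m → F) :
    Matrix F J ℕ := fun α j =>
  (Finset.univ.filter (fun u : Fin k => (∑ i, a i * B j u i) = α)).card

/-- The replication vector of the effect `E_a`: `r^a_α` counts the runs
of the whole plan at level `α` of `E_a`. -/
def replV {m k : ℕ} {F : Type*} [Field F] [Fintype F] [DecidableEq F]
    {J : Type*} [Fintype J] (B : J → Fin k → (Fin m → F)) (a : Fin m → F) :
    F → ℕ := fun α =>
  (Finset.univ.filter (fun ju : J × Fin k => (∑ i, a i * B ju.1 ju.2 i) = α)).card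

/-- The expansion `V(B)` of a blocked plan `B` along a subspace `V`: its blocks are
indexed by pairs `(j, v)`, and block `(j, v)` consists of the runs `v + B j u`. -/
def expandPlan {m k : ℕ} {F : Type*} [Field F] {J : Type*}
    (B : J → Fin k → (Fin m → F)) (V : Submodule F (Fin m → F)) :
    (J × V) → Fin k → (Fin m → F) :=
  fun jv u => (jv.2 : Fin m → F) + B jv.1 u

/-- The orthocomplement `V^⊥ = {w : w·v = 0 for all v ∈ V}` of a subspace `V` of `F^m`
with respect to the dot product `w·v = Σ_i w_i v_i`. -/
def dotPerp {m : ℕ} {F : Type*} [Field F] (V : Submodule F (Fin m → F)) :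
    Submodule F (Fin m → F) where
  carrier := {w | ∀ v ∈ V, ∑ i, w i * v i = 0}
  zero_mem' := by intro v hv; simp
  add_mem' := by
    intro x y hx hy v hv
    simp only [Set.mem_setOf_eq] at hx hy
    simp only [Pi.add_apply, add_mul, Finset.sum_add_distrib, hx v hv, hy v hv, add_zero]
  smul_mem' := by
    intro c x hx v hv
    simp only [Set.mem_setOf_eq] at hx
    simp only [Pi.smul_apply, smul_eq_mul, mul_assoc, ← Finset.mul_sum, hx v hv, mul_zero]

/-- Suppose `V ≠ {0}`, `a ∉ V^⊥`, `c ∉ V^⊥`, and some `γ ∈ F` with `γ ≠ 0`, `γ ≠ 1`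
satisfies `a − γ·c ∈ V^⊥`. If every diagonal entry of `N^{ac}` is positive (as happens
when `E_a` and `E_c` are aliased in `B`), then every entry of the incidence matrix
`Ñ^{ac}` of the expansion `V(B)` is positive; in particular `E_a` and `E_c` are not
aliased in `V(B)`. -/
theorem incNN_expandPlan_pos {m k b : ℕ} {F : Type*} [Field F] [Fintype F]
    [DecidableEq F] (B : Fin b → Fin k → (Fin m → F)) (V : Submodule F (Fin m → F))
    [DecidablePred (· ∈ V)] (hV : V ≠ ⊥)
    (a c : Fin m → F) (haV : a ∉ dotPerp V) (hcV : c ∉ dotPerp V)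
    (γ : F) (hγ0 : γ ≠ 0) (hγ1 : γ ≠ 1) (hac : a - γ • c ∈ dotPerp V)
    (hdiag : ∀ δ : F, 0 < incNN B a c δ δ) :
    ∀ α β : F, 0 < incNN (expandPlan B V) a c α β := by
  intro α β
  -- choose δ with γ(β−δ)+δ = α
  set δ : F := (γ * β - α) / (γ - 1) with hδ
  have hγ1' : γ - 1 ≠ 0 := sub_ne_zero.mpr hγ1
  -- find v0 ∈ V with c·v0 ≠ 0
  have : ∃ v0 ∈ V, (∑ i, c i * v0 i) ≠ 0 := by
    by_contra h
    push_neg at h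
    exact hcV (fun v hv => h v hv)
  obtain ⟨v0, hv0V, hv0⟩ := this
  set v : Fin m → F := ((β - δ) / (∑ i, c i * v0 i)) • v0 with hv
  have hvV : v ∈ V := V.smul_mem _ hv0V
  have hcv : (∑ i, c i * v i) = β - δ := by
    simp only [hv, Pi.smul_apply, smul_eq_mul]
    rw [Finset.sum_congr rfl (fun i _ => by ring : ∀ i ∈ Finset.univ,
      c i * ((β - δ) / (∑ i, c i * v0 i) * v0 i)
        = (β - δ) / (∑ i, c i * v0 i) * (c i * v0 i)), ← Finset.mul_sum]
    field_simp
  have hav : (∑ i, a i * v i) = γ * (β - δ) := by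
    have h0 := hac v hvV
    simp only [Pi.sub_apply, Pi.smul_apply, smul_eq_mul, sub_mul,
      Finset.sum_sub_distrib, sub_eq_zero, mul_assoc, ← Finset.mul_sum] at h0
    rw [h0, hcv]
  -- get a run with a·x = δ, c·x = δ
  have hpos := hdiag δ
  rw [incNN, Finset.card_pos] at hpos
  obtain ⟨⟨j, u⟩, hju⟩ := hpos
  simp only [Finset.mem_filter, Finset.mem_univ, true_and] at hju
  obtain ⟨hax, hcx⟩ := hju
  rw [incNN, Finset.card_pos]
  refine ⟨⟨(j, ⟨v, hvV⟩), u⟩, ?_⟩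
  simp only [Finset.mem_filter, Finset.mem_univ, true_and, expandPlan, Pi.add_apply]
  have expand : ∀ w : Fin m → F, (∑ i, w i * (v i + B j u i))
      = (∑ i, w i * v i) + (∑ i, w i * B j u i) := by
    intro w
    rw [← Finset.sum_add_distrib]
    exact Finset.sum_congr rfl fun i _ => by ring
  refine Finset.mem_filter.mpr ⟨Finset.mem_univ _, ?_⟩
  dsimp only
  constructor
  · rw [expand, hav, hax, hδ]
    field_simp
    ring
  · rw [expand, hcv, hcx]
    ring
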